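/- Let G be a group without involutions (no element of order 2) in which the squaring map is bijective, and let σ be an automorphism of G with σ² = id. Then every element g ∈ G can be written uniquely as g = f·i where σ(f) = f and σ(i) = i⁻¹. -/
import Mathlib


theorem stmt_1 {G : Type*} [Group G]
    (hnoinv : ∀ g : G, g * g = 1 → g = 1)
    (hsq : Function.Bijective (fun x : G => x * x))
    (σ : G ≃* G) (hinv : ∀ g : G, σ (σ g) = g) :
    ∀ g : G, ∃! p : G × G, σ p.1 = p.1 ∧ σ p.2 = p.2⁻¹ ∧ g = p.1 * p.2 := by
  intro g
  obtain ⟨i, hi⟩ := hsq.2 ((σ g)⁻¹ * g)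
  simp only at hi
  have hinj : ∀ a b : G, a * a = b * b → a = b := by
    intro a b h
    exact hsq.1 h
  have hσi : σ i = i⁻¹ := by
    apply hinj
    have h1 : σ i * σ i = g⁻¹ * σ g := by
      rw [← map_mul, hi, map_mul, map_inv, hinv]
    rw [h1]
    rw [← mul_inv_rev, hi]
    simp [mul_inv_rev]
  have hσg : σ g * (i * i) = g := by
    rw [hi]; group
  refine ⟨(g * i⁻¹, i), ⟨?_, hσi, by simp⟩, ?_⟩
  · show σ (g * i⁻¹) = g * i⁻¹
    rw [map_mul, map_inv, hσi, inv_inv, eq_mul_inv_iff_mul_eq, mul_assoc, hσg]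
  · rintro ⟨f, j⟩ ⟨h1, h2, h3⟩
    simp only at h1 h2 h3
    have hj : j = i := by
      apply hinj
      rw [hi, h3, map_mul, h1, h2]
      group
    subst hj
    rw [h3]
    simp
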